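/- arXiv:1605.03374 — 4 statements merged into one kernel-verified Lean document; each statement's English description precedes it below -/
import Mathlib

section
/- Let G and H be odd-size arithmetic progressions in Z_n with central vertices v_G and v_H, and suppose G ∩ H = {v} with v ∉ {v_G, v_H}. If the sum of the two endpoints of G equals the sum of the two endpoints of H in Z_n (i.e., both progressions are assigned the same color j), then there exist u_G ∈ G, u_H ∈ H with u_G + v ≡ u_H + v ≡ j (mod n), forcing u_G = u_H, contradicting |G ∩ H| = 1 (when u_G ≠ v). Hence G and H receive different colors. -/
lemma ap_val {n : ℕ} (v : ℕ → ZMod n) (k : ZMod n) (l : ℕ)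
    (hv : ∀ j, 1 ≤ j → j < l → v (j + 1) - v j = k) :
    ∀ j, 1 ≤ j → j ≤ l → v j = v 1 + (j - 1) • k := by
  intro j
  induction j with
  | zero => omega
  | succ m ih =>
    intro _ hml
    rcases Nat.eq_zero_or_pos m with hm | hm
    · subst hm; simp
    · have hstep := hv m hm (by omega)
      have : v (m + 1) = v m + k := by
        have := hstep; linear_combination this
      rw [this, ih hm (by omega)]
      have : (m + 1 - 1) = (m - 1) + 1 := by omega
      rw [this, succ_nsmul, add_assoc]

lemma ap_sum {n : ℕ} (v : ℕ → ZMod n) (k : ZMod n) (l : ℕ) (hl1 : 1 ≤ l)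
    (hv : ∀ j, 1 ≤ j → j < l → v (j + 1) - v j = k) :
    ∀ j, 1 ≤ j → j ≤ l → v j + v (l + 1 - j) = v 1 + v l := by
  intro j hj hjl
  have h1 := ap_val v k l hv j hj hjl
  have h2 := ap_val v k l hv (l + 1 - j) (by omega) (by omega)
  have h3 := ap_val v k l hv l hl1 le_rfl
  rw [h1, h2, h3]
  have e1 : l + 1 - j - 1 = l - j := by omega
  have e2 : (j - 1) + (l - j) = l - 1 := by omega
  rw [e1, ← e2, add_nsmul]
  ring

/-- Let `G = {v 1, …, v l}` and `H = {u 1, …, u l'}` be odd-size arithmetic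
progressions in `ZMod n` with central vertices `v_G = v ((l+1)/2)`,
`v_H = u ((l'+1)/2)`, and suppose `G ∩ H = {x}` with `x ∉ {v_G, v_H}`. If both
progressions have the same color (equal sums of endpoints), a contradiction
follows; hence `G` and `H` receive different colors. -/
theorem stmt11 (n : ℕ) (hn : 2 ≤ n) (k k' : ZMod n) (l l' : ℕ)
    (hl : Odd l) (hl3 : 3 ≤ l) (hl' : Odd l') (hl3' : 3 ≤ l')
    (v u : ℕ → ZMod n)
    (hv : ∀ j, 1 ≤ j → j < l → v (j + 1) - v j = k)
    (hu : ∀ j, 1 ≤ j → j < l' → u (j + 1) - u j = k')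
    (hvdist : ∀ j j', 1 ≤ j → j ≤ l → 1 ≤ j' → j' ≤ l → v j = v j' → j = j')
    (hudist : ∀ j j', 1 ≤ j → j ≤ l' → 1 ≤ j' → j' ≤ l' → u j = u j' → j = j')
    (x : ZMod n)
    (hcap : ((Finset.Icc 1 l).image v) ∩ ((Finset.Icc 1 l').image u) = {x})
    (hxG : x ≠ v ((l + 1) / 2)) (hxH : x ≠ u ((l' + 1) / 2))
    (hcol : v 1 + v l = u 1 + u l') :
    False := by
  have hxmem : x ∈ ((Finset.Icc 1 l).image v) ∩ ((Finset.Icc 1 l').image u) := by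
    rw [hcap]; exact Finset.mem_singleton_self x
  rw [Finset.mem_inter] at hxmem
  obtain ⟨hxG', hxH'⟩ := hxmem
  obtain ⟨i, hi, hvi⟩ := Finset.mem_image.mp hxG'
  obtain ⟨i', hi', hui⟩ := Finset.mem_image.mp hxH'
  rw [Finset.mem_Icc] at hi hi'
  -- mirror elements
  have hsv := ap_sum v k l (by omega) hv i hi.1 hi.2
  have hsu := ap_sum u k' l' (by omega) hu i' hi'.1 hi'.2
  rw [hvi] at hsv
  rw [hui] at hsu
  have heq : v (l + 1 - i) = u (l' + 1 - i') := by
    linear_combination hsv - hsu + hcol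
  -- the mirror element lies in the intersection, hence equals x
  have hmem : v (l + 1 - i) ∈ ((Finset.Icc 1 l).image v) ∩ ((Finset.Icc 1 l').image u) := by
    rw [Finset.mem_inter]
    constructor
    · exact Finset.mem_image.mpr ⟨l + 1 - i, Finset.mem_Icc.mpr ⟨by omega, by omega⟩, rfl⟩
    · rw [heq]
      exact Finset.mem_image.mpr ⟨l' + 1 - i', Finset.mem_Icc.mpr ⟨by omega, by omega⟩, rfl⟩
  rw [hcap, Finset.mem_singleton] at hmem
  have : l + 1 - i = i := by
    apply hvdist _ _ (by omega) (by omega) hi.1 hi.2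
    rw [hmem, ← hvi]
  have hieq : i = (l + 1) / 2 := by omega
  exact hxG (by rw [← hvi, hieq])
end

section
/- Let n ≥ 2 and identify V(K_n) with Z_n. Let D be a decomposition of K_n into cliques such that for every G ∈ D, the vertex set V(G) is either a k-arithmetic progression in Z_n (for some k) or the disjoint union of two k-arithmetic progressions of equal length, and such that the central vertices of the odd-size arithmetic cliques are pairwise distinct. Then χ'((K_n, D)) ≤ n. -/
/-- `S ⊆ ZMod n` is a `k`-arithmetic progression of length `l`, enumerated (with
distinct values) by `v 1, …, v l` with consecutive differences `k`. -/
def IsArithProg (n : ℕ) (k : ℕ) (v : ℕ → ZMod n) (l : ℕ)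
    (S : Finset (ZMod n)) : Prop :=
  (∀ j, 1 ≤ j → j < l → v (j + 1) - v j = (k : ZMod n)) ∧
  (∀ j j', 1 ≤ j → j ≤ l → 1 ≤ j' → j' ≤ l → v j = v j' → j = j') ∧
  S = (Finset.Icc 1 l).image v

namespace ArithAux

variable {n k l : ℕ} {v : ℕ → ZMod n} {S : Finset (ZMod n)}

lemma formula (h : IsArithProg n k v l S) :
    ∀ j, 1 ≤ j → j ≤ l → v j = v 1 + ((j - 1 : ℕ) : ZMod n) * k := by
  intro j
  induction j with
  | zero => intro h1 _; omega
  | succ m ih =>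
    intro _ hml
    rcases Nat.eq_zero_or_pos m with hm | hm
    · subst hm; simp
    · have hstep := h.1 m hm (by omega)
      have := ih hm (by omega)
      have : v (m + 1) = v m + (k : ZMod n) := by
        rw [← hstep]; ring
      rw [this, ih hm (by omega)]
      have hc : ((m - 1 : ℕ) : ZMod n) + 1 = ((m + 1 - 1 : ℕ) : ZMod n) := by
        have : m - 1 + 1 = m + 1 - 1 := by omega
        rw [← this]; push_cast; ring
      rw [← hc]; ring

lemma mem_of_index (h : IsArithProg n k v l S) {i : ℕ} (h1 : 1 ≤ i) (h2 : i ≤ l) :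
    v i ∈ S := by
  rw [h.2.2]
  exact Finset.mem_image.2 ⟨i, Finset.mem_Icc.2 ⟨h1, h2⟩, rfl⟩

lemma index_of_mem (h : IsArithProg n k v l S) {x : ZMod n} (hx : x ∈ S) :
    ∃ i, 1 ≤ i ∧ i ≤ l ∧ x = v i := by
  rw [h.2.2] at hx
  obtain ⟨i, hi, rfl⟩ := Finset.mem_image.1 hx
  exact ⟨i, (Finset.mem_Icc.1 hi).1, (Finset.mem_Icc.1 hi).2, rfl⟩

/-- The mirror identity inside one progression. -/
lemma mirror (h : IsArithProg n k v l S) {i : ℕ} (h1 : 1 ≤ i) (h2 : i ≤ l) :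
    v 1 + v l - v i = v (l - i + 1) := by
  have hvl := formula h l (le_trans h1 h2) le_rfl
  have hvi := formula h i h1 h2
  have hvm := formula h (l - i + 1) (by omega) (by omega)
  rw [hvl, hvi, hvm]
  have hc : ((l - 1 : ℕ) : ZMod n) - ((i - 1 : ℕ) : ZMod n)
      = ((l - i + 1 - 1 : ℕ) : ZMod n) := by
    have e1 : l - 1 = (l - i + 1 - 1) + (i - 1) := by omega
    rw [e1]; push_cast; ring
  calc v 1 + (v 1 + ((l - 1 : ℕ) : ZMod n) * k) - (v 1 + ((i - 1 : ℕ) : ZMod n) * k)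
      = v 1 + (((l - 1 : ℕ) : ZMod n) - ((i - 1 : ℕ) : ZMod n)) * k := by ring
    _ = v 1 + ((l - i + 1 - 1 : ℕ) : ZMod n) * k := by rw [hc]

/-- The mirror identity across two progressions with the same difference. -/
lemma mirror2 {w : ℕ → ZMod n} {B : Finset (ZMod n)}
    (hA : IsArithProg n k v l S) (hB : IsArithProg n k w l B)
    {i : ℕ} (h1 : 1 ≤ i) (h2 : i ≤ l) :
    v 1 + w l - v i = w (l - i + 1) := by
  have hwl := formula hB l (le_trans h1 h2) le_rfl
  have hvi := formula hA i h1 h2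
  have hwm := formula hB (l - i + 1) (by omega) (by omega)
  rw [hwl, hvi, hwm]
  have hc : ((l - 1 : ℕ) : ZMod n) - ((i - 1 : ℕ) : ZMod n)
      = ((l - i + 1 - 1 : ℕ) : ZMod n) := by
    have e1 : l - 1 = (l - i + 1 - 1) + (i - 1) := by omega
    rw [e1]; push_cast; ring
  calc v 1 + (w 1 + ((l - 1 : ℕ) : ZMod n) * k) - (v 1 + ((i - 1 : ℕ) : ZMod n) * k)
      = w 1 + (((l - 1 : ℕ) : ZMod n) - ((i - 1 : ℕ) : ZMod n)) * k := by ring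
    _ = w 1 + ((l - i + 1 - 1 : ℕ) : ZMod n) * k := by rw [hc]

lemma card_eq (h : IsArithProg n k v l S) : S.card = l := by
  rw [h.2.2]
  rw [Finset.card_image_of_injOn]
  · simp
  · intro a ha b hb hab
    exact h.2.1 a b (Finset.mem_Icc.1 ha).1 (Finset.mem_Icc.1 ha).2
      (Finset.mem_Icc.1 hb).1 (Finset.mem_Icc.1 hb).2 hab

end ArithAux

/-- If `D` is a decomposition of `K_n` on `ZMod n` into cliques whose vertex
sets are `k`-arithmetic or disjoint unions of two equal-length `k`-arithmetic
sets, with pairwise distinct central vertices of odd-size cliques, then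
`χ'((K_n, D)) ≤ n`. -/
theorem stmt13 (n : ℕ) (hn : 2 ≤ n) (D : Finset (Finset (ZMod n)))
    (hdecomp : ∀ a b : ZMod n, a ≠ b → ∃! G, G ∈ D ∧ a ∈ G ∧ b ∈ G)
    (hsize : ∀ G ∈ D, 2 ≤ G.card)
    (harith : ∀ G ∈ D, ∃ k, 1 ≤ k ∧ k ≤ n / 2 ∧
      ((∃ l v, IsArithProg n k v l G) ∨
       (∃ l v w A B, IsArithProg n k v l A ∧ IsArithProg n k w l B ∧
          Disjoint A B ∧ G = A ∪ B)))
    (central : Finset (ZMod n) → ZMod n)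
    (hcentral : ∀ G ∈ D, Odd G.card → ∃ k l v, 1 ≤ k ∧ k ≤ n / 2 ∧ Odd l ∧
      IsArithProg n k v l G ∧ central G = v ((l + 1) / 2))
    (hdistinct : ∀ G ∈ D, ∀ H ∈ D, Odd G.card → Odd H.card → G ≠ H →
      central G ≠ central H) :
    ∃ col : Finset (ZMod n) → ZMod n,
      ∀ G ∈ D, ∀ H ∈ D, G ≠ H → (G ∩ H).Nonempty → col G ≠ col H := by
  classical
  -- Key: every clique admits a "mirror sum".
  have key : ∀ G : Finset (ZMod n), ∃ s : ZMod n, G ∈ D →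
      ∀ x ∈ G, s - x ∈ G ∧ (s - x = x → Odd G.card ∧ x = central G) := by
    intro G
    by_cases hG : G ∈ D
    · by_cases hodd : Odd G.card
      · obtain ⟨k, l, v, hk1, hk2, hlodd, hap, hcen⟩ := hcentral G hG hodd
        refine ⟨v 1 + v l, fun _ x hx => ?_⟩
        obtain ⟨i, hi1, hi2, rfl⟩ := ArithAux.index_of_mem hap hx
        rw [ArithAux.mirror hap hi1 hi2]
        refine ⟨ArithAux.mem_of_index hap (by omega) (by omega), fun heq => ?_⟩
        have hidx := hap.2.1 (l - i + 1) i (by omega) (by omega) hi1 hi2 heq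
        have : i = (l + 1) / 2 := by omega
        exact ⟨hodd, by rw [hcen, this]⟩
      · obtain ⟨k, hk1, hk2, hcase⟩ := harith G hG
        rcases hcase with ⟨l, v, hap⟩ | ⟨l, v, w, A, B, hA, hB, hdisj, rfl⟩
        · refine ⟨v 1 + v l, fun _ x hx => ?_⟩
          obtain ⟨i, hi1, hi2, rfl⟩ := ArithAux.index_of_mem hap hx
          rw [ArithAux.mirror hap hi1 hi2]
          refine ⟨ArithAux.mem_of_index hap (by omega) (by omega), fun heq => ?_⟩
          have hidx := hap.2.1 (l - i + 1) i (by omega) (by omega) hi1 hi2 heq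
          have hcard := ArithAux.card_eq hap
          exact absurd (hcard ▸ (⟨i - 1, by omega⟩ : Odd l)) hodd
        · refine ⟨v 1 + w l, fun _ x hx => ?_⟩
          rcases Finset.mem_union.1 hx with hxA | hxB
          · obtain ⟨i, hi1, hi2, rfl⟩ := ArithAux.index_of_mem hA hxA
            rw [ArithAux.mirror2 hA hB hi1 hi2]
            have hmem : w (l - i + 1) ∈ B :=
              ArithAux.mem_of_index hB (by omega) (by omega)
            refine ⟨Finset.mem_union.2 (Or.inr hmem), fun heq => ?_⟩
            exact (Finset.disjoint_right.1 hdisj (heq ▸ hmem) hxA).elim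
          · obtain ⟨i, hi1, hi2, rfl⟩ := ArithAux.index_of_mem hB hxB
            have hmir : v 1 + w l - w i = v (l - i + 1) := by
              have h1 := ArithAux.formula hB i hi1 hi2
              have h2 := ArithAux.formula hB l (le_trans hi1 hi2) le_rfl
              have h3 := ArithAux.formula hA (l - i + 1) (by omega) (by omega)
              rw [h1, h2, h3]
              have hc : ((l - 1 : ℕ) : ZMod n) - ((i - 1 : ℕ) : ZMod n)
                  = ((l - i + 1 - 1 : ℕ) : ZMod n) := by
                have e1 : l - 1 = (l - i + 1 - 1) + (i - 1) := by omega
                rw [e1]; push_cast; ring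
              calc v 1 + (w 1 + ((l - 1 : ℕ) : ZMod n) * k)
                    - (w 1 + ((i - 1 : ℕ) : ZMod n) * k)
                  = v 1 + (((l - 1 : ℕ) : ZMod n) - ((i - 1 : ℕ) : ZMod n)) * k := by
                    ring
                _ = v 1 + ((l - i + 1 - 1 : ℕ) : ZMod n) * k := by rw [hc]
            rw [hmir]
            have hmem : v (l - i + 1) ∈ A :=
              ArithAux.mem_of_index hA (by omega) (by omega)
            refine ⟨Finset.mem_union.2 (Or.inl hmem), fun heq => ?_⟩
            exact (Finset.disjoint_left.1 hdisj (heq ▸ hmem) hxB).elim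
    · exact ⟨0, fun h => absurd h hG⟩
  choose col hcol using key
  refine ⟨col, fun G hG H hH hne hinter hcoleq => ?_⟩
  obtain ⟨x, hx⟩ := hinter
  have hxG : x ∈ G := (Finset.mem_inter.1 hx).1
  have hxH : x ∈ H := (Finset.mem_inter.1 hx).2
  obtain ⟨hyG, hfixG⟩ := hcol G hG x hxG
  obtain ⟨hyH, hfixH⟩ := hcol H hH x hxH
  rw [← hcoleq] at hyH hfixH
  by_cases hfix : col G - x = x
  · obtain ⟨hoG, hcG⟩ := hfixG hfix
    obtain ⟨hoH, hcH⟩ := hfixH hfix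
    exact hdistinct G hG H hH hoG hoH hne (hcG ▸ hcH ▸ rfl)
  · have hxy : x ≠ col G - x := fun h => hfix h.symm
    obtain ⟨U, _, huniq⟩ := hdecomp x (col G - x) hxy
    exact hne ((huniq G ⟨hG, hxG, hyG⟩).trans (huniq H ⟨hH, hxH, hyH⟩).symm)
end

section
/- Let H be an n-quasicluster that is edge arithmetic with pairwise distinct central edges. Then the chromatic number of H is at most n. -/
lemma ap_eval {n k l : ℕ} {v : ℕ → ZMod n}
    (hstep : ∀ j, 1 ≤ j → j < l → v (j + 1) - v j = (k : ZMod n)) :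
    ∀ j, 1 ≤ j → j ≤ l → v j = v 1 + ((j - 1 : ℕ) : ZMod n) * k := by
  have key : ∀ d, 1 + d ≤ l → v (1 + d) = v 1 + (d : ZMod n) * k := by
    intro d
    induction d with
    | zero => intro _; simp
    | succ m ih =>
      intro h
      have h1 : 1 + m < l := by omega
      have hs := hstep (1 + m) (by omega) h1
      have ihm := ih (by omega)
      have : v (1 + m + 1) = v (1 + m) + (k : ZMod n) := by
        rw [sub_eq_iff_eq_add] at hs
        rw [hs]; ring
      rw [show 1 + (m + 1) = 1 + m + 1 from by omega, this, ihm]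
      push_cast
      ring
  intro j hj1 hjl
  have := key (j - 1) (by omega)
  rwa [show 1 + (j - 1) = j from by omega] at this

lemma ap_reflect {n k l j : ℕ} {v w : ℕ → ZMod n}
    (hstepv : ∀ j, 1 ≤ j → j < l → v (j + 1) - v j = (k : ZMod n))
    (hstepw : ∀ j, 1 ≤ j → j < l → w (j + 1) - w j = (k : ZMod n))
    (hj1 : 1 ≤ j) (hjl : j ≤ l) :
    v 1 + w l - v j = w (l + 1 - j) := by
  have h1 := ap_eval hstepv j hj1 hjl
  have h2 := ap_eval hstepw l (hj1.trans hjl) le_rfl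
  have h3 := ap_eval hstepw (l + 1 - j) (by omega) (by omega)
  rw [h1, h2, h3]
  have hcast : ((l + 1 - j - 1 : ℕ) : ZMod n)
      = ((l - 1 : ℕ) : ZMod n) - ((j - 1 : ℕ) : ZMod n) := by
    rw [eq_sub_iff_add_eq, ← Nat.cast_add]
    congr 1
    omega
  rw [hcast]
  ring

lemma ap_center {n k l : ℕ} {v : ℕ → ZMod n}
    (hstep : ∀ j, 1 ≤ j → j < l → v (j + 1) - v j = (k : ZMod n))
    (hinj : ∀ j j', 1 ≤ j → j ≤ l → 1 ≤ j' → j' ≤ l → v j = v j' → j = j')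
    {j : ℕ} (hj1 : 1 ≤ j) (hjl : j ≤ l)
    (h : v j + v j = v 1 + v l) : 2 * j = l + 1 := by
  have h1 := ap_eval hstep j hj1 hjl
  have h2 := ap_eval hstep l (hj1.trans hjl) le_rfl
  rw [h1, h2] at h
  have hk : ((j - 1 : ℕ) : ZMod n) * k + ((j - 1 : ℕ) : ZMod n) * k
      = ((l - 1 : ℕ) : ZMod n) * k := by linear_combination h
  by_contra hne
  have hm : ∃ m : ℕ, 1 ≤ m ∧ m ≤ l - 1 ∧ (m : ZMod n) * k = 0 := by
    rcases Nat.lt_or_ge (2 * j) (l + 1) with hlt | hge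
    · refine ⟨l + 1 - 2 * j, by omega, by omega, ?_⟩
      have hc : ((l - 1 : ℕ) : ZMod n) = ((l + 1 - 2 * j : ℕ) : ZMod n)
          + ((j - 1 : ℕ) : ZMod n) + ((j - 1 : ℕ) : ZMod n) := by
        rw [← Nat.cast_add, ← Nat.cast_add]
        congr 1
        omega
      rw [hc] at hk
      linear_combination -hk
    · have hgt : l + 1 < 2 * j := by omega
      refine ⟨2 * j - (l + 1), by omega, by omega, ?_⟩
      have hc : ((j - 1 : ℕ) : ZMod n) + ((j - 1 : ℕ) : ZMod n)
          = ((2 * j - (l + 1) : ℕ) : ZMod n) + ((l - 1 : ℕ) : ZMod n) := by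
        rw [← Nat.cast_add, ← Nat.cast_add]
        congr 1
        omega
      have := hk
      rw [show ((j - 1 : ℕ) : ZMod n) * k + ((j - 1 : ℕ) : ZMod n) * k
          = (((j - 1 : ℕ) : ZMod n) + ((j - 1 : ℕ) : ZMod n)) * k from by ring,
        hc] at this
      linear_combination this
  obtain ⟨m, hm1, hml, hmk⟩ := hm
  have hv : v (1 + m) = v 1 := by
    rw [ap_eval hstep (1 + m) (by omega) (by omega),
      show (1 + m - 1 : ℕ) = m from by omega, hmk]
    ring
  have := hinj (1 + m) 1 (by omega) (by omega) (by omega) (hj1.trans hjl) hv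
  omega

lemma ap_card {n k l : ℕ} {v : ℕ → ZMod n} {S : Finset (ZMod n)}
    (h : IsArithProg n k v l S) : S.card = l := by
  obtain ⟨_, hinj, hS⟩ := h
  rw [hS, Finset.card_image_of_injOn, Nat.card_Icc]
  · omega
  · intro a ha b hb hab
    rw [Finset.mem_coe, Finset.mem_Icc] at ha hb
    exact hinj a b ha.1 ha.2 hb.1 hb.2 hab

/-- Let `H` be an `n`-quasicluster (an intersecting linear hypergraph with `n`
edges, each of size at most `n` and at least `2`, every vertex in at least two
edges) that is edge arithmetic via a bijective labeling `φ : edges → ZMod n`,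
with pairwise distinct central edges (given by `centralLabel`). Then
`χ(H) ≤ n`. -/
theorem stmt14 {α : Type*} [DecidableEq α] (n : ℕ) (hn : 2 ≤ n)
    (E : Finset (Finset α))
    (hcard : E.card = n)
    (hsize : ∀ e ∈ E, 2 ≤ e.card ∧ e.card ≤ n)
    (hinter : ∀ e ∈ E, ∀ f ∈ E, e ≠ f → (e ∩ f).card = 1)
    (hdeg : ∀ u : α, (∃ e ∈ E, u ∈ e) →
      2 ≤ (E.filter (fun e => u ∈ e)).card)
    (φ : Finset α → ZMod n)
    (hφinj : ∀ e ∈ E, ∀ f ∈ E, φ e = φ f → e = f)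
    (hφsurj : ∀ c : ZMod n, ∃ e ∈ E, φ e = c)
    (harith : ∀ u : α, (∃ e ∈ E, u ∈ e) → ∃ k, 1 ≤ k ∧ k ≤ n / 2 ∧
      ((∃ l v, IsArithProg n k v l ((E.filter (fun e => u ∈ e)).image φ)) ∨
       (∃ l v w A B, IsArithProg n k v l A ∧ IsArithProg n k w l B ∧
          Disjoint A B ∧ (E.filter (fun e => u ∈ e)).image φ = A ∪ B)))
    (centralLabel : α → ZMod n)
    (hcentral : ∀ u : α, (∃ e ∈ E, u ∈ e) →
      Odd (E.filter (fun e => u ∈ e)).card →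
      ∃ k l v, 1 ≤ k ∧ k ≤ n / 2 ∧ Odd l ∧
        IsArithProg n k v l ((E.filter (fun e => u ∈ e)).image φ) ∧
        centralLabel u = v ((l + 1) / 2))
    (hdistinct : ∀ u w : α, (∃ e ∈ E, u ∈ e) → (∃ e ∈ E, w ∈ e) →
      Odd (E.filter (fun e => u ∈ e)).card →
      Odd (E.filter (fun e => w ∈ e)).card →
      u ≠ w → centralLabel u ≠ centralLabel w) :
    ∃ c : α → ZMod n, ∀ e ∈ E, ∀ u ∈ e, ∀ v ∈ e, u ≠ v → c u ≠ c v := by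
  classical
  -- per-vertex key lemma
  have key : ∀ u : α, (∃ e ∈ E, u ∈ e) → ∃ s : ZMod n,
      (∀ x ∈ (E.filter (fun e => u ∈ e)).image φ,
        s - x ∈ (E.filter (fun e => u ∈ e)).image φ) ∧
      (∀ x ∈ (E.filter (fun e => u ∈ e)).image φ, x + x = s →
        Odd (E.filter (fun e => u ∈ e)).card ∧ x = centralLabel u) := by
    intro u hu
    have hScard : ((E.filter (fun e => u ∈ e)).image φ).card
        = (E.filter (fun e => u ∈ e)).card := by
      apply Finset.card_image_of_injOn
      intro a ha b hb hab
      rw [Finset.mem_coe, Finset.mem_filter] at ha hb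
      exact hφinj a ha.1 b hb.1 hab
    by_cases hodd : Odd (E.filter (fun e => u ∈ e)).card
    · obtain ⟨k, l, v, hk1, hk2, hl, hap, hc⟩ := hcentral u hu hodd
      obtain ⟨hstep, hinj, hSeq⟩ := hap
      refine ⟨v 1 + v l, ?_, ?_⟩
      · intro x hx
        rw [hSeq] at hx ⊢
        obtain ⟨j, hj, rfl⟩ := Finset.mem_image.mp hx
        rw [Finset.mem_Icc] at hj
        rw [ap_reflect hstep hstep hj.1 hj.2]
        exact Finset.mem_image.mpr ⟨l + 1 - j, Finset.mem_Icc.mpr ⟨by omega, by omega⟩, rfl⟩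
      · intro x hx heq
        rw [hSeq] at hx
        obtain ⟨j, hj, rfl⟩ := Finset.mem_image.mp hx
        rw [Finset.mem_Icc] at hj
        have h2j := ap_center hstep hinj hj.1 hj.2 heq
        refine ⟨hodd, ?_⟩
        rw [hc, show (l + 1) / 2 = j from by omega]
    · obtain ⟨k, hk1, hk2, hcase⟩ := harith u hu
      rcases hcase with ⟨l, v, hap⟩ | ⟨l, v, w, A, B, hapA, hapB, hdisj, hSeq⟩
      · obtain ⟨hstep, hinj, hSeq⟩ := hap
        have hlcard : ((E.filter (fun e => u ∈ e)).image φ).card = l :=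
          ap_card ⟨hstep, hinj, hSeq⟩
        have hleven : Even l := by
          rw [← hlcard, hScard]
          exact Nat.not_odd_iff_even.mp hodd
        refine ⟨v 1 + v l, ?_, ?_⟩
        · intro x hx
          rw [hSeq] at hx ⊢
          obtain ⟨j, hj, rfl⟩ := Finset.mem_image.mp hx
          rw [Finset.mem_Icc] at hj
          rw [ap_reflect hstep hstep hj.1 hj.2]
          exact Finset.mem_image.mpr ⟨l + 1 - j, Finset.mem_Icc.mpr ⟨by omega, by omega⟩, rfl⟩
        · intro x hx heq
          rw [hSeq] at hx
          obtain ⟨j, hj, rfl⟩ := Finset.mem_image.mp hx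
          rw [Finset.mem_Icc] at hj
          have h2j := ap_center hstep hinj hj.1 hj.2 heq
          obtain ⟨c, hc⟩ := hleven
          omega
      · obtain ⟨hstepA, hinjA, hAeq⟩ := hapA
        obtain ⟨hstepB, hinjB, hBeq⟩ := hapB
        refine ⟨v 1 + w l, ?_, ?_⟩
        · intro x hx
          rw [hSeq] at hx ⊢
          rw [Finset.mem_union] at hx
          rcases hx with hx | hx
          · rw [hAeq] at hx
            obtain ⟨j, hj, rfl⟩ := Finset.mem_image.mp hx
            rw [Finset.mem_Icc] at hj
            rw [ap_reflect hstepA hstepB hj.1 hj.2]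
            refine Finset.mem_union_right _ ?_
            rw [hBeq]
            exact Finset.mem_image.mpr ⟨l + 1 - j, Finset.mem_Icc.mpr ⟨by omega, by omega⟩, rfl⟩
          · rw [hBeq] at hx
            obtain ⟨j, hj, rfl⟩ := Finset.mem_image.mp hx
            rw [Finset.mem_Icc] at hj
            have : v 1 + w l - w j = v (l + 1 - j) := by
              have h1 := ap_eval hstepB j hj.1 hj.2
              have h2 := ap_eval hstepB l (hj.1.trans hj.2) le_rfl
              have h3 := ap_eval hstepA (l + 1 - j) (by omega) (by omega)
              rw [h1, h2, h3]
              have hcast : ((l + 1 - j - 1 : ℕ) : ZMod n)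
                  = ((l - 1 : ℕ) : ZMod n) - ((j - 1 : ℕ) : ZMod n) := by
                rw [eq_sub_iff_add_eq, ← Nat.cast_add]
                congr 1
                omega
              rw [hcast]
              ring
            rw [this]
            refine Finset.mem_union_left _ ?_
            rw [hAeq]
            exact Finset.mem_image.mpr ⟨l + 1 - j, Finset.mem_Icc.mpr ⟨by omega, by omega⟩, rfl⟩
        · intro x hx heq
          exfalso
          rw [hSeq, Finset.mem_union] at hx
          have hxx : v 1 + w l - x = x := by
            rw [← heq]; ring
          rcases hx with hx | hx
          · -- x ∈ A, reflection lands in B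
            rw [hAeq] at hx
            obtain ⟨j, hj, hjx⟩ := Finset.mem_image.mp hx
            rw [Finset.mem_Icc] at hj
            have hrB : v 1 + w l - x ∈ B := by
              rw [← hjx, ap_reflect hstepA hstepB hj.1 hj.2, hBeq]
              exact Finset.mem_image.mpr ⟨l + 1 - j, Finset.mem_Icc.mpr ⟨by omega, by omega⟩, rfl⟩
            rw [hxx] at hrB
            exact Finset.disjoint_left.mp hdisj (by rw [hAeq]; exact hx) hrB
          · rw [hBeq] at hx
            obtain ⟨j, hj, hjx⟩ := Finset.mem_image.mp hx
            rw [Finset.mem_Icc] at hj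
            have hrA : v 1 + w l - x ∈ A := by
              rw [← hjx]
              have h1 := ap_eval hstepB j hj.1 hj.2
              have h2 := ap_eval hstepB l (hj.1.trans hj.2) le_rfl
              have h3 := ap_eval hstepA (l + 1 - j) (by omega) (by omega)
              have : v 1 + w l - w j = v (l + 1 - j) := by
                rw [h1, h2, h3]
                have hcast : ((l + 1 - j - 1 : ℕ) : ZMod n)
                    = ((l - 1 : ℕ) : ZMod n) - ((j - 1 : ℕ) : ZMod n) := by
                  rw [eq_sub_iff_add_eq, ← Nat.cast_add]
                  congr 1
                  omega
                rw [hcast]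
                ring
              rw [this, hAeq]
              exact Finset.mem_image.mpr ⟨l + 1 - j, Finset.mem_Icc.mpr ⟨by omega, by omega⟩, rfl⟩
            rw [hxx] at hrA
            exact Finset.disjoint_left.mp hdisj hrA (by rw [hBeq]; exact hx)
  choose s hs1 hs2 using key
  refine ⟨fun u => if h : ∃ e ∈ E, u ∈ e then s u h else 0, ?_⟩
  intro e he u hue w hwe huw
  have hu : ∃ e ∈ E, u ∈ e := ⟨e, he, hue⟩
  have hw : ∃ e ∈ E, w ∈ e := ⟨e, he, hwe⟩
  simp only [dif_pos hu, dif_pos hw]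
  intro hceq
  have htu : φ e ∈ (E.filter (fun f => u ∈ f)).image φ := Finset.mem_image.mpr ⟨e, Finset.mem_filter.mpr ⟨he, hue⟩, rfl⟩
  have htw : φ e ∈ (E.filter (fun f => w ∈ f)).image φ := Finset.mem_image.mpr ⟨e, Finset.mem_filter.mpr ⟨he, hwe⟩, rfl⟩
  have hcommon : ∀ x, x ∈ (E.filter (fun f => u ∈ f)).image φ →
      x ∈ (E.filter (fun f => w ∈ f)).image φ → x = φ e := by
    intro x hxu hxw
    obtain ⟨e1, he1, rfl⟩ := Finset.mem_image.mp hxu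
    obtain ⟨e2, he2, hx2⟩ := Finset.mem_image.mp hxw
    rw [Finset.mem_filter] at he1 he2
    have he12 : e2 = e1 := hφinj e2 he2.1 e1 he1.1 hx2
    by_cases hee : e1 = e
    · rw [hee]
    · exfalso
      have h1 := hinter e he e1 he1.1 (Ne.symm hee)
      have h2 : 1 < (e ∩ e1).card := by
        apply Finset.one_lt_card.mpr
        exact ⟨u, Finset.mem_inter.mpr ⟨hue, he1.2⟩,
          w, Finset.mem_inter.mpr ⟨hwe, by rw [← he12]; exact he2.2⟩, huw⟩
      omega
  have h1 : s u hu - φ e ∈ (E.filter (fun f => u ∈ f)).image φ := hs1 u hu _ htu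
  have h2 : s u hu - φ e ∈ (E.filter (fun f => w ∈ f)).image φ := by rw [hceq]; exact hs1 w hw _ htw
  have hfix : s u hu - φ e = φ e := hcommon _ h1 h2
  have hts : φ e + φ e = s u hu := by linear_combination -hfix
  obtain ⟨hOu, hCu⟩ := hs2 u hu _ htu hts
  obtain ⟨hOw, hCw⟩ := hs2 w hw _ htw (by rw [← hceq]; exact hts)
  exact hdistinct u w hu hw hOu hOw huw (hCu.symm.trans hCw)
end

section
/- In the edge coloring of K_n on Z_n given by {a,b} ↦ a+b, two disjoint edges {a,b} and {c,d} have the same color if and only if a+b ≡ c+d (mod n); consequently, if G and H are vertex sets of two cliques in a linear decomposition (|V(G) ∩ V(H)| ≤ 1) whose associated matchings M_G, M_H (pairing symmetric elements of their arithmetic orderings) both contain an edge through their common vertex v, then the colors of G and H differ. -/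
/-- The edge coloring of `K_n` on `ZMod n` given by `{a,b} ↦ a+b`. -/
def pairColor (n : ℕ) : Sym2 (ZMod n) → ZMod n :=
  Sym2.lift ⟨fun a b => a + b, fun a b => add_comm a b⟩

lemma arith_formula {n : ℕ} (k : ZMod n) (l : ℕ) (v : ℕ → ZMod n)
    (hv : ∀ j, 1 ≤ j → j < l → v (j + 1) - v j = k) :
    ∀ i, 1 ≤ i → i ≤ l → v i = v 1 + (i - 1) • k := by
  intro i
  induction i with
  | zero => omega
  | succ j ih =>
    intro _ hle
    rcases Nat.eq_or_lt_of_le (show 1 ≤ j + 1 from Nat.le_add_left 1 j) with h1 | h1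
    · simp [← h1]
    · have hj1 : 1 ≤ j := by omega
      have hjl : j < l := by omega
      have := hv j hj1 hjl
      have hvj : v (j + 1) = v j + k := by
        have : v (j + 1) - v j + v j = k + v j := by rw [this]
        simpa [sub_add_cancel, add_comm] using this
      rw [hvj, ih hj1 (by omega)]
      have : j + 1 - 1 = (j - 1) + 1 := by omega
      rw [this, succ_nsmul]
      ring

lemma arith_sum {n : ℕ} (k : ZMod n) (l : ℕ) (v : ℕ → ZMod n) (hl : 2 ≤ l)
    (hv : ∀ j, 1 ≤ j → j < l → v (j + 1) - v j = k) :
    ∀ j, 1 ≤ j → j ≤ l → v j + v (l + 1 - j) = v 1 + v l := by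
  intro j hj1 hjl
  have h1 : v j = v 1 + (j - 1) • k := arith_formula k l v hv j hj1 hjl
  have h2 : v (l + 1 - j) = v 1 + (l + 1 - j - 1) • k :=
    arith_formula k l v hv (l + 1 - j) (by omega) (by omega)
  have h3 : v l = v 1 + (l - 1) • k := arith_formula k l v hv l (by omega) le_rfl
  have hnat : (j - 1) + (l + 1 - j - 1) = l - 1 := by omega
  rw [h1, h2, h3]
  rw [show v 1 + (j - 1) • k + (v 1 + (l + 1 - j - 1) • k)
      = v 1 + (v 1 + ((j - 1) • k + (l + 1 - j - 1) • k)) by ring,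
    ← add_nsmul, hnat]

/-- In the edge coloring `{a,b} ↦ a+b` of `K_n` on `ZMod n`, two disjoint edges
`{a,b}` and `{c,d}` have the same color iff `a+b = c+d`; consequently, if `G`
and `H` are vertex sets of two cliques in a linear decomposition (sharing
exactly one vertex `x`) whose associated matchings (pairing symmetric elements
of their arithmetic orderings) both contain an edge through `x`, then the
colors of `G` and `H` differ. -/
theorem stmt19 (n : ℕ) (hn : 2 ≤ n) :
    (∀ a b c d : ZMod n, a ≠ b → c ≠ d →
      ({a, b} : Finset (ZMod n)) ∩ {c, d} = ∅ →
      (pairColor n s(a, b) = pairColor n s(c, d) ↔ a + b = c + d)) ∧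
    (∀ (k k' : ZMod n) (l m : ℕ) (v w : ℕ → ZMod n) (x : ZMod n),
      2 ≤ l → 2 ≤ m →
      (∀ j, 1 ≤ j → j < l → v (j + 1) - v j = k) →
      (∀ j, 1 ≤ j → j < m → w (j + 1) - w j = k') →
      (∀ j j', 1 ≤ j → j ≤ l → 1 ≤ j' → j' ≤ l → v j = v j' → j = j') →
      (∀ j j', 1 ≤ j → j ≤ m → 1 ≤ j' → j' ≤ m → w j = w j' → j = j') →
      ((Finset.Icc 1 l).image v) ∩ ((Finset.Icc 1 m).image w) = {x} →
      (∃ j, 1 ≤ j ∧ j ≤ l ∧ x = v j ∧ v (l + 1 - j) ≠ x) →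
      (∃ j, 1 ≤ j ∧ j ≤ m ∧ x = w j ∧ w (m + 1 - j) ≠ x) →
      v 1 + v l ≠ w 1 + w m) := by
  constructor
  · intro a b c d _ _ _
    simp [pairColor]
  · intro k k' l m v w x hl hm hv hw hvinj hwinj hcap ⟨j, hj1, hjl, hxj, hyx⟩
      ⟨j', hj'1, hj'm, hxj', hzx⟩ heq
    set y := v (l + 1 - j) with hy
    set z := w (m + 1 - j') with hz
    have hsum1 : v j + y = v 1 + v l := arith_sum k l v hl hv j hj1 hjl
    have hsum2 : w j' + z = w 1 + w m := arith_sum k' m w hm hw j' hj'1 hj'm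
    have hyz : y = z := by
      have h : v j + y = w j' + z := by rw [hsum1, hsum2, heq]
      rw [← hxj, ← hxj'] at h
      exact add_left_cancel h
    have hymem : y ∈ ((Finset.Icc 1 l).image v) ∩ ((Finset.Icc 1 m).image w) := by
      refine Finset.mem_inter.2 ⟨?_, ?_⟩
      · exact Finset.mem_image.2 ⟨l + 1 - j, Finset.mem_Icc.2 ⟨by omega, by omega⟩, rfl⟩
      · exact Finset.mem_image.2 ⟨m + 1 - j', Finset.mem_Icc.2 ⟨by omega, by omega⟩, hyz.symm⟩
    rw [hcap, Finset.mem_singleton] at hymem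
    exact hyx hymem
end
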